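/- Let E be a finite set and f : 2^E → ℝ≥0 a monotone submodular function. Then for every x ∈ [0,1]^E: F(x) ≥ F((1 − e^{−x_i})_{i∈E}) ≥ (1 − 1/e)·f*(x), where F is the multilinear extension of f and f* is its coverage extension. -/

import Mathlib

/-- `f : 2^E → ℝ` is submodular: `f(S∪{e}) − f(S) ≥ f(T∪{e}) − f(T)` for all
`S ⊆ T` and `e ∉ T`. -/
def Submodular {E : Type} [DecidableEq E] (f : Finset E → ℝ) : Prop :=
  ∀ S T : Finset E, S ⊆ T → ∀ e ∉ T,
    f (insert e T) - f T ≤ f (insert e S) - f S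

/-- The multilinear extension `F(x) = ∑_{S⊆E} f(S) ∏_{i∈S} x_i ∏_{i∉S} (1−x_i)`. -/
noncomputable def multilinear {E : Type} [Fintype E] [DecidableEq E]
    (f : Finset E → ℝ) (x : E → ℝ) : ℝ :=
  ∑ S : Finset E, f S * (∏ i ∈ S, x i) * ∏ i ∈ Sᶜ, (1 - x i)

/-- The coverage extension `f*(x) = min_{S⊆E} ( f(S) + ∑_{i∈E} (f(S∪{i}) − f(S))·x_i )`. -/
noncomputable def coverageExt {E : Type} [Fintype E] [DecidableEq E]
    (f : Finset E → ℝ) (x : E → ℝ) : ℝ :=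
  Finset.univ.inf' Finset.univ_nonempty
    (fun S : Finset E => f S + ∑ i, (f (insert i S) - f S) * x i)

namespace Stmt12

open Finset

variable {E : Type} [Fintype E] [DecidableEq E]

lemma prob_sum (y : E → ℝ) :
    ∑ S : Finset E, (∏ i ∈ S, y i) * ∏ i ∈ Sᶜ, (1 - y i) = 1 := by
  have h := Finset.prod_add y (fun i => 1 - y i) Finset.univ
  simp only [add_sub_cancel, Finset.prod_const_one, Finset.powerset_univ,
    ← Finset.compl_eq_univ_sdiff] at h
  exact h.symm

lemma prob_nonneg {y : E → ℝ} (hy : ∀ i, 0 ≤ y i ∧ y i ≤ 1) (S : Finset E) :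
    0 ≤ (∏ i ∈ S, y i) * ∏ i ∈ Sᶜ, (1 - y i) := by
  apply mul_nonneg
  · exact Finset.prod_nonneg fun i _ => (hy i).1
  · exact Finset.prod_nonneg fun i _ => by linarith [(hy i).2]

lemma multilinear_split (f : Finset E → ℝ) (z : E → ℝ) (e : E) :
    multilinear f z =
      ∑ S ∈ univ.filter (fun S : Finset E => e ∉ S),
        (z e * f (insert e S) + (1 - z e) * f S) *
          ((∏ j ∈ S, z j) * ∏ j ∈ Sᶜ.erase e, (1 - z j)) := by
  unfold multilinear
  rw [← Finset.sum_filter_add_sum_filter_not univ (fun S : Finset E => e ∈ S)]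
  have h1 : ∑ S ∈ univ.filter (fun S : Finset E => e ∈ S),
      f S * (∏ i ∈ S, z i) * ∏ i ∈ Sᶜ, (1 - z i)
      = ∑ S ∈ univ.filter (fun S : Finset E => e ∉ S),
        (z e * f (insert e S)) * ((∏ j ∈ S, z j) * ∏ j ∈ Sᶜ.erase e, (1 - z j)) := by
    apply Finset.sum_nbij' (fun S => S.erase e) (fun S => insert e S)
    · intro S hS; simp only [mem_filter, mem_univ, true_and] at hS ⊢
      exact Finset.notMem_erase e S
    · intro S hS; simp only [mem_filter, mem_univ, true_and] at hS ⊢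
      exact Finset.mem_insert_self e S
    · intro S hS; simp only [mem_filter, mem_univ, true_and] at hS
      exact Finset.insert_erase hS
    · intro S hS; simp only [mem_filter, mem_univ, true_and] at hS
      exact Finset.erase_insert hS
    · intro S hS; simp only [mem_filter, mem_univ, true_and] at hS
      rw [Finset.insert_erase hS, ← Finset.mul_prod_erase S z hS,
        show Sᶜ = (S.erase e)ᶜ.erase e by
          rw [Finset.compl_erase, Finset.erase_insert (by simp [hS])]]
      ring
  have h2 : ∑ S ∈ univ.filter (fun S : Finset E => e ∉ S),
      f S * (∏ i ∈ S, z i) * ∏ i ∈ Sᶜ, (1 - z i)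
      = ∑ S ∈ univ.filter (fun S : Finset E => e ∉ S),
        ((1 - z e) * f S) * ((∏ j ∈ S, z j) * ∏ j ∈ Sᶜ.erase e, (1 - z j)) := by
    apply Finset.sum_congr rfl
    intro S hS; simp only [mem_filter, mem_univ, true_and] at hS
    rw [← Finset.mul_prod_erase Sᶜ (fun j => 1 - z j) (Finset.mem_compl.2 hS)]
    ring
  rw [h1, h2, ← Finset.sum_add_distrib]
  apply Finset.sum_congr rfl
  intro S _; ring

lemma multilinear_update_le (f : Finset E → ℝ)
    (hmono : ∀ S T : Finset E, S ⊆ T → f S ≤ f T)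
    (z : E → ℝ) (hz : ∀ i, 0 ≤ z i ∧ z i ≤ 1) (e : E) {a b : ℝ} (hab : a ≤ b) :
    multilinear f (Function.update z e a) ≤ multilinear f (Function.update z e b) := by
  rw [multilinear_split f _ e, multilinear_split f _ e]
  apply Finset.sum_le_sum
  intro S hS
  simp only [mem_filter, mem_univ, true_and] at hS
  have hpa : ∀ j ∈ S, Function.update z e a j = z j := fun j hj =>
    Function.update_of_ne (by rintro rfl; exact hS hj) _ _
  have hpb : ∀ j ∈ S, Function.update z e b j = z j := fun j hj =>
    Function.update_of_ne (by rintro rfl; exact hS hj) _ _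
  have hqa : ∀ j ∈ Sᶜ.erase e, (1 - Function.update z e a j) = 1 - z j := fun j hj => by
    rw [Function.update_of_ne (Finset.ne_of_mem_erase hj)]
  have hqb : ∀ j ∈ Sᶜ.erase e, (1 - Function.update z e b j) = 1 - z j := fun j hj => by
    rw [Function.update_of_ne (Finset.ne_of_mem_erase hj)]
  rw [Finset.prod_congr rfl hpa, Finset.prod_congr rfl hpb,
    Finset.prod_congr rfl hqa, Finset.prod_congr rfl hqb,
    Function.update_self, Function.update_self]
  have hP : 0 ≤ (∏ j ∈ S, z j) * ∏ j ∈ Sᶜ.erase e, (1 - z j) :=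
    mul_nonneg (Finset.prod_nonneg fun i _ => (hz i).1)
      (Finset.prod_nonneg fun i _ => by linarith [(hz i).2])
  have hfm : f S ≤ f (insert e S) := hmono S (insert e S) (Finset.subset_insert e S)
  nlinarith [mul_le_mul_of_nonneg_right (sub_nonneg.2 hab) (mul_nonneg (sub_nonneg.2 hfm) hP)]

lemma multilinear_mono (f : Finset E → ℝ)
    (hmono : ∀ S T : Finset E, S ⊆ T → f S ≤ f T)
    {y x : E → ℝ} (hy : ∀ i, 0 ≤ y i) (hx : ∀ i, x i ≤ 1) (hyx : ∀ i, y i ≤ x i) :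
    multilinear f y ≤ multilinear f x := by
  suffices h : ∀ A : Finset E,
      multilinear f y ≤ multilinear f (fun i => if i ∈ A then x i else y i) by
    have := h univ
    simpa using this
  intro A
  induction A using Finset.induction_on with
  | empty => simp
  | @insert e A he ih =>
    set w : E → ℝ := fun i => if i ∈ A then x i else y i with hw
    have hwz : ∀ i, 0 ≤ w i ∧ w i ≤ 1 := by
      intro i; dsimp [w]; split
      · exact ⟨le_trans (hy i) (hyx i), hx i⟩
      · exact ⟨hy i, le_trans (hyx i) (hx i)⟩
    have h1 : w = Function.update w e (y e) := by
      funext i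
      rcases eq_or_ne i e with rfl | hne
      · simp [Function.update_self, hw, he]
      · simp [Function.update_of_ne hne]
    have h2 : (fun i => if i ∈ insert e A then x i else y i)
        = Function.update w e (x e) := by
      funext i
      rcases eq_or_ne i e with rfl | hne
      · simp [Function.update_self]
      · simp [Function.update_of_ne hne, hw, Finset.mem_insert, hne]
    calc multilinear f y ≤ multilinear f w := ih
      _ = multilinear f (Function.update w e (y e)) := by rw [← h1]
      _ ≤ multilinear f (Function.update w e (x e)) :=
          multilinear_update_le f hmono w hwz e (hyx e)
      _ = _ := by rw [h2]

lemma sum_mem_eq (S : Finset E) (G : E → ℝ) :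
    ∑ i ∈ S, G i = ∑ i : E, if i ∈ S then G i else 0 := by
  rw [Finset.sum_ite_mem, Finset.univ_inter]

lemma reindex (F : Finset E → E → ℝ) :
    ∑ S : Finset E, ∑ i ∈ S, F S i
      = ∑ T : Finset E, ∑ i ∈ Tᶜ, F (insert i T) i := by
  calc ∑ S : Finset E, ∑ i ∈ S, F S i
      = ∑ S : Finset E, ∑ i : E, if i ∈ S then F S i else 0 :=
        Finset.sum_congr rfl fun S _ => sum_mem_eq S (F S)
    _ = ∑ i : E, ∑ S : Finset E, if i ∈ S then F S i else 0 := Finset.sum_comm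
    _ = ∑ i : E, ∑ S ∈ univ.filter (fun S : Finset E => i ∈ S), F S i :=
        Finset.sum_congr rfl fun i _ => (Finset.sum_filter _ _).symm
    _ = ∑ i : E, ∑ S ∈ univ.filter (fun S : Finset E => i ∉ S), F (insert i S) i := by
        apply Finset.sum_congr rfl
        intro i _
        apply Finset.sum_nbij' (fun S => S.erase i) (fun S => insert i S)
        · intro S hS; simp only [mem_filter, mem_univ, true_and] at hS ⊢
          exact Finset.notMem_erase i S
        · intro S hS; simp only [mem_filter, mem_univ, true_and] at hS ⊢
          exact Finset.mem_insert_self i S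
        · intro S hS; simp only [mem_filter, mem_univ, true_and] at hS
          exact Finset.insert_erase hS
        · intro S hS; simp only [mem_filter, mem_univ, true_and] at hS
          exact Finset.erase_insert hS
        · intro S hS; simp only [mem_filter, mem_univ, true_and] at hS
          rw [Finset.insert_erase hS]
    _ = ∑ i : E, ∑ S : Finset E, if i ∉ S then F (insert i S) i else 0 :=
        Finset.sum_congr rfl fun i _ => Finset.sum_filter _ _
    _ = ∑ S : Finset E, ∑ i : E, if i ∉ S then F (insert i S) i else 0 := Finset.sum_comm
    _ = ∑ T : Finset E, ∑ i ∈ Tᶜ, F (insert i T) i := by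
        apply Finset.sum_congr rfl
        intro T _
        rw [sum_mem_eq Tᶜ]
        apply Finset.sum_congr rfl
        intro i _
        simp [Finset.mem_compl]

lemma key_identity (f : Finset E → ℝ) (g h c : E → ℝ) :
    ∑ S : Finset E,
      f S * ((∑ i ∈ S, (∏ j ∈ S.erase i, g j) * (c i * h i)) * ∏ j ∈ Sᶜ, h j
        + (∏ j ∈ S, g j) * ∑ i ∈ Sᶜ, (∏ j ∈ Sᶜ.erase i, h j) * (-(c i * h i)))
    = ∑ S : Finset E,
        ((∏ j ∈ S, g j) * ∏ j ∈ Sᶜ, h j) * ∑ i ∈ Sᶜ, (f (insert i S) - f S) * c i := by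
  have expand : ∀ S : Finset E,
      f S * ((∑ i ∈ S, (∏ j ∈ S.erase i, g j) * (c i * h i)) * ∏ j ∈ Sᶜ, h j
        + (∏ j ∈ S, g j) * ∑ i ∈ Sᶜ, (∏ j ∈ Sᶜ.erase i, h j) * (-(c i * h i)))
      = (∑ i ∈ S, f S * ((∏ j ∈ S.erase i, g j) * (c i * h i) * ∏ j ∈ Sᶜ, h j))
        - ∑ i ∈ Sᶜ, f S * ((∏ j ∈ S, g j) * ((∏ j ∈ Sᶜ.erase i, h j) * (c i * h i))) := by
    intro S
    rw [sub_eq_add_neg, ← Finset.sum_neg_distrib, mul_add]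
    congr 1
    · rw [Finset.sum_mul, Finset.mul_sum]
      try exact Finset.sum_congr rfl fun i _ => by ring
    · rw [Finset.mul_sum, Finset.mul_sum]
      try exact Finset.sum_congr rfl fun i _ => by ring
  have expandR : ∀ S : Finset E,
      ((∏ j ∈ S, g j) * ∏ j ∈ Sᶜ, h j) * ∑ i ∈ Sᶜ, (f (insert i S) - f S) * c i
      = (∑ i ∈ Sᶜ, f (insert i S) * ((∏ j ∈ S, g j) * ((∏ j ∈ Sᶜ.erase i, h j) * (c i * h i))))
        - ∑ i ∈ Sᶜ, f S * ((∏ j ∈ S, g j) * ((∏ j ∈ Sᶜ.erase i, h j) * (c i * h i))) := by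
    intro S
    rw [Finset.mul_sum, ← Finset.sum_sub_distrib]
    apply Finset.sum_congr rfl
    intro i hi
    rw [show (∏ j ∈ Sᶜ, h j) = h i * ∏ j ∈ Sᶜ.erase i, h j from
      (Finset.mul_prod_erase Sᶜ h hi).symm]
    ring
  simp only [expand, expandR]
  rw [Finset.sum_sub_distrib, Finset.sum_sub_distrib]
  congr 1
  rw [reindex (fun S i => f S * ((∏ j ∈ S.erase i, g j) * (c i * h i) * ∏ j ∈ Sᶜ, h j))]
  apply Finset.sum_congr rfl
  intro T _
  apply Finset.sum_congr rfl
  intro i hi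
  rw [Finset.mem_compl] at hi
  rw [Finset.erase_insert hi, Finset.compl_insert]
  ring

/-- `G(t) = F(1 − e^{−t·x})` written with explicit exponentials. -/
noncomputable def Gf (f : Finset E → ℝ) (x : E → ℝ) (t : ℝ) : ℝ :=
  ∑ S : Finset E,
    f S * ((∏ i ∈ S, (1 - Real.exp (-(t * x i)))) * ∏ i ∈ Sᶜ, Real.exp (-(t * x i)))

/-- The derivative of `Gf`. -/
noncomputable def Df (f : Finset E → ℝ) (x : E → ℝ) (t : ℝ) : ℝ :=
  ∑ S : Finset E,
    ((∏ j ∈ S, (1 - Real.exp (-(t * x j)))) * ∏ j ∈ Sᶜ, Real.exp (-(t * x j))) *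
      ∑ i ∈ Sᶜ, (f (insert i S) - f S) * x i

lemma multilinear_eq_G (f : Finset E → ℝ) (x : E → ℝ) (t : ℝ) :
    multilinear f (fun i => 1 - Real.exp (-(t * x i))) = Gf f x t := by
  unfold multilinear Gf
  apply Finset.sum_congr rfl
  intro S _
  have h : ∏ i ∈ Sᶜ, (1 - (1 - Real.exp (-(t * x i)))) = ∏ i ∈ Sᶜ, Real.exp (-(t * x i)) :=
    Finset.prod_congr rfl fun i _ => by ring
  rw [mul_assoc, h]

lemma hasDerivAt_factor (x : E → ℝ) (i : E) (t : ℝ) :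
    HasDerivAt (fun t : ℝ => Real.exp (-(t * x i)))
      (-(x i * Real.exp (-(t * x i)))) t := by
  have h2 : HasDerivAt (fun t : ℝ => -(t * x i)) (-(x i)) t :=
    (hasDerivAt_mul_const (x i)).neg
  have h3 := (Real.hasDerivAt_exp (-(t * x i))).comp t h2
  rw [show -(x i * Real.exp (-(t * x i))) = Real.exp (-(t * x i)) * -(x i) by ring]
  exact h3

lemma hasDerivAt_G (f : Finset E → ℝ) (x : E → ℝ) (t : ℝ) :
    HasDerivAt (Gf f x) (Df f x t) t := by
  unfold Gf Df
  rw [← key_identity f (fun j => 1 - Real.exp (-(t * x j))) (fun j => Real.exp (-(t * x j))) x]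
  apply HasDerivAt.fun_sum
  intro S _
  have hg : HasDerivAt (fun t : ℝ => ∏ i ∈ S, (1 - Real.exp (-(t * x i))))
      (∑ i ∈ S, (∏ j ∈ S.erase i, (1 - Real.exp (-(t * x j)))) *
        (x i * Real.exp (-(t * x i)))) t := by
    have := HasDerivAt.fun_finsetProd (u := S)
      (f := fun i t => 1 - Real.exp (-(t * x i)))
      (f' := fun i => x i * Real.exp (-(t * x i)))
      (fun i _ => by
        have := (hasDerivAt_factor x i t).const_sub 1
        simpa using this)
    simpa using this
  have hh : HasDerivAt (fun t : ℝ => ∏ i ∈ Sᶜ, Real.exp (-(t * x i)))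
      (∑ i ∈ Sᶜ, (∏ j ∈ Sᶜ.erase i, Real.exp (-(t * x j))) *
        (-(x i * Real.exp (-(t * x i))))) t := by
    have := HasDerivAt.fun_finsetProd (u := Sᶜ)
      (f := fun i t => Real.exp (-(t * x i)))
      (f' := fun i => -(x i * Real.exp (-(t * x i))))
      (fun i _ => hasDerivAt_factor x i t)
    simpa using this
  exact (hg.mul hh).const_mul (f S)

lemma sum_compl_marg (f : Finset E → ℝ) (x : E → ℝ) (S : Finset E) :
    ∑ i ∈ Sᶜ, (f (insert i S) - f S) * x i = ∑ i, (f (insert i S) - f S) * x i := by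
  have h0 : ∑ i ∈ S, (f (insert i S) - f S) * x i = 0 :=
    Finset.sum_eq_zero fun i hi => by rw [Finset.insert_eq_self.2 hi, sub_self, zero_mul]
  rw [← Finset.sum_add_sum_compl S (fun i => (f (insert i S) - f S) * x i), h0, zero_add]

lemma GD_ge (f : Finset E → ℝ) (x : E → ℝ) (hx0 : ∀ i, 0 ≤ x i) (t : ℝ) (ht : 0 ≤ t) :
    coverageExt f x ≤ Gf f x t + Df f x t := by
  have hy : ∀ i, 0 ≤ (1 - Real.exp (-(t * x i))) ∧ (1 - Real.exp (-(t * x i))) ≤ 1 := by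
    intro i
    constructor
    · have : Real.exp (-(t * x i)) ≤ 1 :=
        Real.exp_le_one_iff.2 (neg_nonpos.2 (mul_nonneg ht (hx0 i)))
      linarith
    · have := Real.exp_pos (-(t * x i)); linarith
  have hp : ∀ S : Finset E,
      0 ≤ (∏ i ∈ S, (1 - Real.exp (-(t * x i)))) * ∏ i ∈ Sᶜ, Real.exp (-(t * x i)) := by
    intro S
    have := prob_nonneg hy S
    simpa [sub_sub_cancel] using this
  have hps : ∑ S : Finset E,
      (∏ i ∈ S, (1 - Real.exp (-(t * x i)))) * ∏ i ∈ Sᶜ, Real.exp (-(t * x i)) = 1 := by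
    have := prob_sum (E := E) (fun i => 1 - Real.exp (-(t * x i)))
    simpa [sub_sub_cancel] using this
  have sumEq : Gf f x t + Df f x t
      = ∑ S : Finset E,
          ((∏ i ∈ S, (1 - Real.exp (-(t * x i)))) * ∏ i ∈ Sᶜ, Real.exp (-(t * x i))) *
            (f S + ∑ i, (f (insert i S) - f S) * x i) := by
    unfold Gf Df
    rw [← Finset.sum_add_distrib]
    apply Finset.sum_congr rfl
    intro S _
    rw [sum_compl_marg]
    ring
  rw [sumEq]
  calc coverageExt f x
      = (∑ S : Finset E,
          (∏ i ∈ S, (1 - Real.exp (-(t * x i)))) * ∏ i ∈ Sᶜ, Real.exp (-(t * x i)))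
          * coverageExt f x := by rw [hps, one_mul]
    _ = ∑ S : Finset E,
          ((∏ i ∈ S, (1 - Real.exp (-(t * x i)))) * ∏ i ∈ Sᶜ, Real.exp (-(t * x i)))
            * coverageExt f x := Finset.sum_mul _ _ _
    _ ≤ _ := by
        apply Finset.sum_le_sum
        intro S _
        exact mul_le_mul_of_nonneg_left
          (Finset.inf'_le (fun S : Finset E => f S + ∑ i, (f (insert i S) - f S) * x i)
            (Finset.mem_univ S)) (hp S)

end Stmt12

/-- For a monotone submodular `f : 2^E → ℝ≥0` and every `x ∈ [0,1]^E`,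
`F(x) ≥ F(1 − e^{−x}) ≥ (1 − 1/e)·f*(x)`. -/
theorem statement12 {E : Type} [Fintype E] [DecidableEq E]
    (f : Finset E → ℝ) (hf0 : ∀ S, 0 ≤ f S)
    (hsub : Submodular f)
    (hmono : ∀ S T : Finset E, S ⊆ T → f S ≤ f T)
    (x : E → ℝ) (hx : ∀ i, 0 ≤ x i ∧ x i ≤ 1) :
    multilinear f (fun i => 1 - Real.exp (-x i)) ≤ multilinear f x ∧
    (1 - 1 / Real.exp 1) * coverageExt f x ≤
      multilinear f (fun i => 1 - Real.exp (-x i)) := by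
  open Stmt12 in
  have part1 : multilinear f (fun i => 1 - Real.exp (-x i)) ≤ multilinear f x := by
    apply Stmt12.multilinear_mono f hmono
    · intro i
      have : Real.exp (-x i) ≤ 1 := Real.exp_le_one_iff.2 (neg_nonpos.2 (hx i).1)
      linarith
    · exact fun i => (hx i).2
    · intro i
      have := Real.add_one_le_exp (-(x i))
      linarith
  refine ⟨part1, ?_⟩
  set c := coverageExt f x with hc
  have hx0 : ∀ i, 0 ≤ x i := fun i => (hx i).1
  have hc0 : 0 ≤ c := by
    rw [hc]
    apply Finset.le_inf'
    intro S _
    apply add_nonneg (hf0 S)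
    apply Finset.sum_nonneg
    intro i _
    exact mul_nonneg (sub_nonneg.2 (hmono S (insert i S) (Finset.subset_insert i S))) (hx0 i)
  have hψ : ∀ t : ℝ, HasDerivAt (fun t => Real.exp t * (Stmt12.Gf f x t - c))
      (Real.exp t * (Stmt12.Gf f x t - c) + Real.exp t * Stmt12.Df f x t) t := fun t =>
    (Real.hasDerivAt_exp t).mul ((Stmt12.hasDerivAt_G f x t).sub_const c)
  have hmonoψ : MonotoneOn (fun t => Real.exp t * (Stmt12.Gf f x t - c)) (Set.Icc 0 1) := by
    apply monotoneOn_of_deriv_nonneg (convex_Icc 0 1)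
    · exact fun t _ => (hψ t).continuousAt.continuousWithinAt
    · exact fun t _ => (hψ t).differentiableAt.differentiableWithinAt
    · intro t ht
      rw [interior_Icc, Set.mem_Ioo] at ht
      rw [(hψ t).deriv]
      have h1 : c ≤ Stmt12.Gf f x t + Stmt12.Df f x t :=
        Stmt12.GD_ge f x hx0 t (le_of_lt ht.1)
      nlinarith [Real.exp_pos t]
  have hmm := hmonoψ (Set.left_mem_Icc.2 zero_le_one) (Set.right_mem_Icc.2 zero_le_one)
    zero_le_one
  simp only [Real.exp_zero, one_mul] at hmm
  have hG0 : 0 ≤ Stmt12.Gf f x 0 := by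
    unfold Stmt12.Gf
    apply Finset.sum_nonneg
    intro S _
    apply mul_nonneg (hf0 S)
    apply mul_nonneg
    · exact Finset.prod_nonneg fun i _ => by simp
    · exact Finset.prod_nonneg fun i _ => (Real.exp_pos _).le
  have hfinal : multilinear f (fun i => 1 - Real.exp (-x i)) = Stmt12.Gf f x 1 := by
    rw [show (fun i => 1 - Real.exp (-x i)) = (fun i => 1 - Real.exp (-(1 * x i))) by
      funext i; rw [one_mul], Stmt12.multilinear_eq_G]
  rw [hfinal]
  have he := Real.exp_pos 1
  have hinv : Real.exp 1 * (1 / Real.exp 1) = 1 := mul_one_div_cancel (ne_of_gt he)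
  nlinarith [hmm, hG0, hc0, he, hinv]
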